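/- Suppose F : I × I → I is such that for every compact proper subinterval [u,v] ⊆ I there is a continuous strictly increasing bijection f_{uv} : [0,1] → [u,v] with F(x,y) = f_{uv}((f_{uv}⁻¹(x)+f_{uv}⁻¹(y))/2) for all x,y ∈ [u,v]. Then F is continuous on I × I and is a quasi-arithmetic mean on I: there is a continuous strictly monotonic bijection f from an interval J onto I with F(x,y) = f((f⁻¹(x)+f⁻¹(y))/2) for all x,y ∈ I. -/

import Mathlib

open Set Filter

/-- A strictly monotone map from an order-connected set onto an order-connected set
is continuous on that set. -/
lemma aux_cont {f : ℝ → ℝ} {S T : Set ℝ} (hS : S.OrdConnected) (hT : T.OrdConnected)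
    (hm : StrictMonoOn f S) (hmap : Set.MapsTo f S T) (hsurj : Set.SurjOn f S T) :
    ContinuousOn f S := by
  have hright : ∀ a ∈ S, (∃ b ∈ S, a < b) → ContinuousWithinAt f (Ici a) a := by
    rintro a ha ⟨b, hb, hab⟩
    refine hm.continuousWithinAt_right_of_exists_between ?_ ?_
    · exact mem_of_superset (Icc_mem_nhdsGE_of_mem ⟨le_refl a, hab⟩) (hS.out ha hb)
    · intro y hy
      have hfab : f a < f b := hm ha hb hab
      refine ?_
      have hw : min y (f b) ∈ T := hT.out (hmap ha) (hmap hb) ⟨le_min hy.le hfab.le, min_le_right _ _⟩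
      obtain ⟨c, hc, hfc⟩ := hsurj hw
      have hfa_lt : f a < f c := by
        rw [hfc]; exact lt_min hy hfab
      have hac : a < c := by
        by_contra h
        push_neg at h
        exact absurd (hm.monotoneOn hc ha h) (not_le.mpr hfa_lt)
      exact ⟨c, hc, hfa_lt, by rw [hfc]; exact min_le_left _ _⟩
  have hleft : ∀ a ∈ S, (∃ b ∈ S, b < a) → ContinuousWithinAt f (Iic a) a := by
    rintro a ha ⟨b, hb, hab⟩
    refine hm.continuousWithinAt_left_of_exists_between ?_ ?_
    · exact mem_of_superset (Icc_mem_nhdsLE_of_mem ⟨hab, le_refl a⟩) (hS.out hb ha)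
    · intro y hy
      have hfab : f b < f a := hm hb ha hab
      have hw : max y (f b) ∈ T := hT.out (hmap hb) (hmap ha) ⟨le_max_right _ _, max_le hy.le hfab.le⟩
      obtain ⟨c, hc, hfc⟩ := hsurj hw
      have hfa_lt : f c < f a := by rw [hfc]; exact max_lt hy hfab
      exact ⟨c, hc, by rw [hfc]; exact le_max_left _ _, hfa_lt⟩
  intro a ha
  by_cases h1 : ∃ b ∈ S, a < b <;> by_cases h2 : ∃ b ∈ S, b < a
  · exact (((hleft a ha h2).union (hright a ha h1)).mono (by
      intro x _; rcases le_total x a with h | h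
      · exact Or.inl h
      · exact Or.inr h))
  · refine (hright a ha h1).mono ?_
    intro x hx
    push_neg at h2
    exact h2 x hx
  · refine (hleft a ha h2).mono ?_
    intro x hx
    push_neg at h1
    exact h1 x hx
  · refine (continuousWithinAt_singleton (f := f) (x := a)).mono ?_
    intro x hx
    push_neg at h1 h2
    exact le_antisymm (h1 x hx) (h2 x hx)



/-- A continuous midpoint-affine function fixing 0 and 1 on an interval containing [0,1]
is the identity. -/
lemma aux_jensen {φ : ℝ → ℝ} {s t : ℝ} (hs : s ≤ 0) (ht : 1 ≤ t)
    (hc : ContinuousOn φ (Set.Icc s t)) (h0 : φ 0 = 0) (h1 : φ 1 = 1)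
    (hmid : ∀ x ∈ Set.Icc s t, ∀ y ∈ Set.Icc s t, φ ((x + y) / 2) = (φ x + φ y) / 2) :
    ∀ x ∈ Set.Icc s t, φ x = x := by
  have hsub : Icc (0:ℝ) 1 ⊆ Icc s t := Icc_subset_Icc hs ht
  -- dyadic rationals in [0,1] are fixed
  have hdy : ∀ k : ℕ, ∀ j : ℕ, j ≤ 2 ^ k → φ ((j : ℝ) / 2 ^ k) = (j : ℝ) / 2 ^ k := by
    intro k
    induction k with
    | zero =>
      intro j hj
      interval_cases j <;> norm_num [h0, h1]
    | succ k ih =>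
      intro j hj
      rcases Nat.even_or_odd j with ⟨m, hm⟩ | ⟨m, hm⟩
      · have hm2 : m ≤ 2 ^ k := by omega
        have : (j : ℝ) / 2 ^ (k + 1) = (m : ℝ) / 2 ^ k := by
          subst hm; push_cast; ring
        rw [this]; exact ih m hm2
      · have hm2 : m + 1 ≤ 2 ^ k := by
          subst hm; omega
        have hmem : ∀ i : ℕ, i ≤ 2 ^ k → ((i : ℝ) / 2 ^ k) ∈ Icc s t := by
          intro i hi
          refine hsub ⟨by positivity, ?_⟩
          rw [div_le_one (by positivity)]
          exact_mod_cast hi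
        have e1 := hmid _ (hmem m (by omega)) _ (hmem (m + 1) hm2)
        have e2 : ((m : ℝ) / 2 ^ k + ((m : ℕ) + 1 : ℝ) / 2 ^ k) / 2 = (j : ℝ) / 2 ^ (k + 1) := by
          subst hm; push_cast; ring
        push_cast at e1 e2
        rw [e2] at e1
        have ihm := ih m (by omega)
        have ihm1 := ih (m + 1) hm2
        push_cast at ihm ihm1
        rw [e1, ihm, ihm1]
        exact e2
  -- all of [0,1] is fixed, by density and continuity
  have hunit : ∀ x ∈ Icc (0:ℝ) 1, φ x = x := by
    intro x hx
    set d : ℕ → ℝ := fun k => (⌊x * 2 ^ k⌋ : ℝ) / 2 ^ k with hd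
    have hdmem : ∀ k, d k ∈ Icc (0:ℝ) 1 := by
      intro k
      have h1' : (0:ℝ) ≤ x * 2 ^ k := mul_nonneg hx.1 (by positivity)
      constructor
      · have hz : (0:ℤ) ≤ ⌊x * 2 ^ k⌋ := Int.floor_nonneg.mpr h1'
        have hz' : (0:ℝ) ≤ (⌊x * 2 ^ k⌋ : ℝ) := by exact_mod_cast hz
        exact div_nonneg hz' (by positivity)
      · rw [div_le_one (by positivity)]
        calc (⌊x * 2 ^ k⌋ : ℝ) ≤ x * 2 ^ k := Int.floor_le _
          _ ≤ 1 * 2 ^ k := by nlinarith [hx.2, (by positivity : (0:ℝ) < (2:ℝ) ^ k)]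
          _ = 2 ^ k := by ring
    have hdfix : ∀ k, φ (d k) = d k := by
      intro k
      have hnn : (0:ℤ) ≤ ⌊x * 2 ^ k⌋ := Int.floor_nonneg.mpr (mul_nonneg hx.1 (by positivity))
      set n : ℕ := (⌊x * 2 ^ k⌋).toNat with hn
      have htn : ((n : ℤ)) = ⌊x * 2 ^ k⌋ := Int.toNat_of_nonneg hnn
      have hcast : ((n : ℕ) : ℝ) = ((⌊x * 2 ^ k⌋ : ℤ) : ℝ) := by exact_mod_cast htn
      have hnle : n ≤ 2 ^ k := by
        have hr : (⌊x * 2 ^ k⌋ : ℝ) ≤ (2:ℝ) ^ k := by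
          calc (⌊x * 2 ^ k⌋ : ℝ) ≤ x * 2 ^ k := Int.floor_le _
            _ ≤ 2 ^ k := by nlinarith [hx.2, (by positivity : (0:ℝ) < (2:ℝ) ^ k)]
        have hzz : ((n:ℤ):ℝ) ≤ ((2:ℤ) ^ k : ℝ) := by rw [htn]; push_cast; exact_mod_cast hr
        have : (n:ℤ) ≤ (2:ℤ) ^ k := by exact_mod_cast hzz
        exact_mod_cast this
      have : d k = (n : ℝ) / 2 ^ k := by rw [hd]; simp only; rw [hcast]
      rw [this]
      exact hdy k n hnle
    have htend : Tendsto d atTop (nhds x) := by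
      have hlow : ∀ k, x - (1/2 : ℝ) ^ k ≤ d k := by
        intro k
        have h2 : (0:ℝ) < 2 ^ k := by positivity
        have := Int.sub_one_lt_floor (x * 2 ^ k)
        have hfl : x * 2 ^ k - 1 < (⌊x * 2 ^ k⌋ : ℝ) := by linarith
        rw [hd]; simp only
        rw [le_div_iff₀ h2]
        have : (1/2:ℝ) ^ k * 2 ^ k = 1 := by
          rw [← mul_pow]; norm_num
        nlinarith
      have hhigh : ∀ k, d k ≤ x := by
        intro k
        have h2 : (0:ℝ) < 2 ^ k := by positivity
        rw [hd]; simp only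
        rw [div_le_iff₀ h2]
        exact Int.floor_le _
      have hl : Tendsto (fun k : ℕ => x - (1/2:ℝ) ^ k) atTop (nhds x) := by
        have : Tendsto (fun k : ℕ => (1/2:ℝ) ^ k) atTop (nhds 0) :=
          tendsto_pow_atTop_nhds_zero_of_lt_one (by norm_num) (by norm_num)
        simpa using (tendsto_const_nhds (x := x)).sub this
      exact tendsto_of_tendsto_of_tendsto_of_le_of_le hl tendsto_const_nhds hlow hhigh
    have hcx : ContinuousWithinAt φ (Icc s t) x := hc x (hsub hx)
    have htend2 : Tendsto d atTop (nhdsWithin x (Icc s t)) := by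
      exact tendsto_nhdsWithin_of_tendsto_nhds_of_eventually_within (s := Icc s t) d htend
        (Eventually.of_forall fun k => hsub (hdmem k))
    have h3 : Tendsto (fun k => φ (d k)) atTop (nhds (φ x)) := hcx.tendsto.comp htend2
    have h4 : Tendsto (fun k => φ (d k)) atTop (nhds x) := by
      simpa only [hdfix] using htend
    exact tendsto_nhds_unique h3 h4
  -- extend to all of [s,t] by reflections
  have hext : ∀ n : ℕ, ∀ x ∈ Icc s t, -(n:ℝ) ≤ x → x ≤ n + 1 → φ x = x := by
    intro n
    induction n with
    | zero =>
      intro x hx h1' h2'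
      exact hunit x ⟨by simpa using h1', by simpa using h2'⟩
    | succ n ih =>
      intro x hx h1' h2'
      push_cast at h1' h2'
      by_cases hb1 : x ≤ n + 1
      · by_cases hb2 : -(n:ℝ) ≤ x
        · exact ih x hx hb2 hb1
        · -- x < -n : reflect about -n
          push_neg at hb2
          set y : ℝ := 2 * (-(n:ℝ)) - x with hy
          have hyst : y ∈ Icc s t := by
            constructor
            · have : -(n:ℝ) ≤ y := by rw [hy]; linarith
              linarith [hx.1, this, hb2.le, hx.1.trans hb2.le]
            · have : y ≤ n + 1 := by rw [hy]; linarith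
              linarith [ht]
          have hyfix : φ y = y := ih y hyst (by rw [hy]; linarith) (by rw [hy]; linarith)
          have hmfix : φ (-(n:ℝ)) = -(n:ℝ) := by
            refine ih _ ⟨?_, ?_⟩ (le_refl _) (by push_cast; linarith)
            · linarith [hx.1]
            · linarith [ht]
          have := hmid x hx y hyst
          have hmidpt : (x + y) / 2 = -(n:ℝ) := by rw [hy]; ring
          rw [hmidpt, hmfix, hyfix] at this
          linarith
      · -- x > n+1 : reflect about n+1
        push_neg at hb1
        set y : ℝ := 2 * ((n:ℝ) + 1) - x with hy
        have hyst : y ∈ Icc s t := by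
          constructor
          · have : (n:ℝ) ≤ y := by rw [hy]; linarith
            linarith [hs]
          · have : y ≤ n + 1 := by rw [hy]; linarith
            linarith [hx.2, hb1]
        have hyfix : φ y = y := ih y hyst (by rw [hy]; push_cast; linarith) (by rw [hy]; linarith)
        have hmfix : φ ((n:ℝ) + 1) = (n:ℝ) + 1 := by
          refine ih _ ⟨?_, ?_⟩ (by push_cast; linarith) (le_refl _)
          · linarith [hs]
          · linarith [hx.2, hb1]
        have := hmid x hx y hyst
        have hmidpt : (x + y) / 2 = (n:ℝ) + 1 := by rw [hy]; ring
        rw [hmidpt, hmfix, hyfix] at this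
        linarith
  intro x hx
  obtain ⟨n, hn⟩ := exists_nat_ge |x|
  have h1' : -(n:ℝ) ≤ x := by
    have := abs_le.mp (le_of_eq rfl : |x| ≤ |x|)
    have := neg_abs_le x
    linarith
  have h2' : x ≤ n + 1 := by
    have := le_abs_self x
    linarith
  exact hext n x hx h1' h2'


section
variable {F : ℝ → ℝ → ℝ} {a b u v s t : ℝ} {f g : ℝ → ℝ}

/-- A normalized quasi-arithmetic generator for `F` on `[u,v]`, sending `0 ↦ a`, `1 ↦ b`. -/
structure IsGen (F : ℝ → ℝ → ℝ) (a b u v s t : ℝ) (f g : ℝ → ℝ) : Prop where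
  hs0 : s ≤ 0
  ht1 : 1 ≤ t
  cont : ContinuousOn f (Set.Icc s t)
  mono : StrictMonoOn f (Set.Icc s t)
  maps : Set.MapsTo f (Set.Icc s t) (Set.Icc u v)
  linv : ∀ x ∈ Set.Icc s t, g (f x) = x
  rinv : ∀ x ∈ Set.Icc u v, g x ∈ Set.Icc s t ∧ f (g x) = x
  f0 : f 0 = a
  f1 : f 1 = b
  mean : ∀ x ∈ Set.Icc u v, ∀ y ∈ Set.Icc u v, F x y = f ((g x + g y) / 2)

lemma IsGen.mem0 (h : IsGen F a b u v s t f g) : (0:ℝ) ∈ Icc s t :=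
  ⟨h.hs0, zero_le_one.trans h.ht1⟩

lemma IsGen.mem1 (h : IsGen F a b u v s t f g) : (1:ℝ) ∈ Icc s t :=
  ⟨h.hs0.trans zero_le_one, h.ht1⟩

lemma IsGen.gmono (h : IsGen F a b u v s t f g) : StrictMonoOn g (Icc u v) := by
  intro x hx y hy hxy
  by_contra hle
  push_neg at hle
  have h1 := (h.rinv x hx)
  have h2 := (h.rinv y hy)
  have : f (g y) ≤ f (g x) := h.mono.monotoneOn h2.1 h1.1 hle
  rw [h1.2, h2.2] at this
  exact absurd hxy (not_lt.mpr this)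

lemma IsGen.ga (h : IsGen F a b u v s t f g) (ha : a ∈ Icc u v) : g a = 0 := by
  have := h.linv 0 h.mem0
  rwa [h.f0] at this

lemma IsGen.gb (h : IsGen F a b u v s t f g) (hb : b ∈ Icc u v) : g b = 1 := by
  have := h.linv 1 h.mem1
  rwa [h.f1] at this

lemma IsGen.gsurj (h : IsGen F a b u v s t f g) : ∀ w ∈ Icc s t, ∃ z ∈ Icc u v, g z = w := by
  intro w hw
  exact ⟨f w, h.maps hw, h.linv w hw⟩

/-- Uniqueness of the normalized generator: the inverse maps agree. -/
lemma IsGen.g_unique {s' t' : ℝ} {f' g' : ℝ → ℝ}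
    (h : IsGen F a b u v s t f g) (h' : IsGen F a b u v s' t' f' g')
    (ha : a ∈ Icc u v) (hb : b ∈ Icc u v) :
    ∀ x ∈ Icc u v, g x = g' x := by
  set φ : ℝ → ℝ := fun x => g' (f x) with hφ
  have hφmono : StrictMonoOn φ (Icc s t) := by
    intro x hx y hy hxy
    exact h'.gmono (h.maps hx) (h.maps hy) (h.mono hx hy hxy)
  have hφmaps : MapsTo φ (Icc s t) (Icc s' t') := fun x hx => (h'.rinv _ (h.maps hx)).1
  have hφsurj : SurjOn φ (Icc s t) (Icc s' t') := by
    intro w hw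
    have hx : f' w ∈ Icc u v := h'.maps hw
    have hc := h.rinv _ hx
    exact ⟨g (f' w), hc.1, by simp only [hφ]; rw [hc.2, h'.linv w hw]⟩
  have hφcont : ContinuousOn φ (Icc s t) := by
    have : ContinuousOn g' (Icc u v) :=
      aux_cont ordConnected_Icc ordConnected_Icc h'.gmono
        (fun x hx => (h'.rinv x hx).1) (fun w hw => (h'.gsurj w hw).imp (fun z hz => ⟨hz.1, hz.2⟩))
    exact this.comp h.cont h.maps
  have hφ0 : φ 0 = 0 := by simp only [hφ]; rw [h.f0]; exact h'.ga ha
  have hφ1 : φ 1 = 1 := by simp only [hφ]; rw [h.f1]; exact h'.gb hb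
  have hφmid : ∀ x ∈ Icc s t, ∀ y ∈ Icc s t, φ ((x + y) / 2) = (φ x + φ y) / 2 := by
    intro x hx y hy
    have hfx := h.maps hx
    have hfy := h.maps hy
    have hFf : F (f x) (f y) = f ((x + y) / 2) := by
      rw [h.mean _ hfx _ hfy, h.linv x hx, h.linv y hy]
    have hF' : F (f x) (f y) = f' ((g' (f x) + g' (f y)) / 2) := h'.mean _ hfx _ hfy
    have hmem : (g' (f x) + g' (f y)) / 2 ∈ Icc s' t' := by
      have m1 := (h'.rinv _ hfx).1
      have m2 := (h'.rinv _ hfy).1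
      exact ⟨by linarith [m1.1, m2.1], by linarith [m1.2, m2.2]⟩
    simp only [hφ]
    rw [← hFf, hF', h'.linv _ hmem]
  have hid := aux_jensen h.hs0 h.ht1 hφcont hφ0 hφ1 hφmid
  intro x hx
  have hgx := h.rinv x hx
  have := hid (g x) hgx.1
  simp only [hφ] at this
  rw [hgx.2] at this
  exact this.symm

/-- Restriction of a generator to a smaller interval `[u,v] ⊆ [u',v']` is a generator. -/
lemma IsGen.restrict {u' v' s' t' : ℝ} {f' g' : ℝ → ℝ}
    (h' : IsGen F a b u' v' s' t' f' g') (huu : u' ≤ u) (hvv : v ≤ v')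
    (hau : u ≤ a) (hbv : b ≤ v) (hab : a < b) :
    IsGen F a b u v (g' u) (g' v) f' g' := by
  have hsub : Icc u v ⊆ Icc u' v' := Icc_subset_Icc huu hvv
  have haI : a ∈ Icc u v := ⟨hau, le_trans hab.le hbv⟩
  have hbI : b ∈ Icc u v := ⟨le_trans hau hab.le, hbv⟩
  have hga : g' a = 0 := h'.ga (hsub haI)
  have hgb : g' b = 1 := h'.gb (hsub hbI)
  have huv : u ∈ Icc u' v' := hsub ⟨le_refl u, le_trans hau (le_trans hab.le hbv)⟩
  have hvv' : v ∈ Icc u' v' := hsub ⟨le_trans hau (le_trans hab.le hbv), le_refl v⟩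
  have hmono' := h'.gmono.monotoneOn
  have hgu := (h'.rinv u huv)
  have hgv := (h'.rinv v hvv')
  have hsubst : Icc (g' u) (g' v) ⊆ Icc s' t' := Icc_subset_Icc hgu.1.1 hgv.1.2
  have hmapsTo : MapsTo f' (Icc (g' u) (g' v)) (Icc u v) := by
    intro x hx
    constructor
    · have := h'.mono.monotoneOn hgu.1 (hsubst hx) hx.1
      rwa [hgu.2] at this
    · have := h'.mono.monotoneOn (hsubst hx) hgv.1 hx.2
      rwa [hgv.2] at this
  refine ⟨?_, ?_, h'.cont.mono hsubst, h'.mono.mono hsubst, hmapsTo, fun x hx => h'.linv x (hsubst hx),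
    ?_, h'.f0, h'.f1, fun x hx y hy => h'.mean x (hsub hx) y (hsub hy)⟩
  · rw [← hga]; exact hmono' huv (hsub haI) hau
  · rw [← hgb]; exact hmono' (hsub hbI) hvv' hbv
  · intro x hx
    have hgx := h'.rinv x (hsub hx)
    refine ⟨⟨?_, ?_⟩, hgx.2⟩
    · exact hmono' huv (hsub hx) hx.1
    · exact hmono' (hsub hx) hvv' hx.2

/-- Existence: normalizing the local generator from `hloc`. -/
lemma gen_exists {f₀ g₀ : ℝ → ℝ}
    (hc : ContinuousOn f₀ (Icc 0 1)) (hm : StrictMonoOn f₀ (Icc 0 1))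
    (hbij : BijOn f₀ (Icc 0 1) (Icc u v))
    (hli : ∀ x ∈ Icc (0:ℝ) 1, g₀ (f₀ x) = x)
    (hmean : ∀ x ∈ Icc u v, ∀ y ∈ Icc u v, F x y = f₀ ((g₀ x + g₀ y) / 2))
    (ha : a ∈ Icc u v) (hb : b ∈ Icc u v) (hab : a < b) :
    ∃ s t f g, IsGen F a b u v s t f g := by
  have hri : ∀ x ∈ Icc u v, g₀ x ∈ Icc (0:ℝ) 1 ∧ f₀ (g₀ x) = x := by
    intro x hx
    obtain ⟨c, hc1, hc2⟩ := hbij.surjOn hx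
    have : g₀ x = c := by rw [← hc2, hli c hc1]
    rw [this, hc2]
    exact ⟨hc1, rfl⟩
  set α := g₀ a with hα
  set β := g₀ b with hβ
  have hra := hri a ha
  have hrb := hri b hb
  have hαβ : α < β := by
    by_contra hle
    push_neg at hle
    have := hm.monotoneOn hrb.1 hra.1 hle
    rw [hra.2, hrb.2] at this
    exact absurd hab (not_lt.mpr this)
  set c := β - α with hcdef
  have hcpos : (0:ℝ) < c := by simp [hcdef]; linarith
  set A : ℝ → ℝ := fun x => α + c * x with hA
  refine ⟨-α / c, (1 - α) / c, fun x => f₀ (A x), fun y => (g₀ y - α) / c, ?_⟩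
  have hkey : ∀ x : ℝ, x ∈ Icc (-α / c) ((1 - α) / c) ↔ A x ∈ Icc (0:ℝ) 1 := by
    intro x
    simp only [hA, mem_Icc, div_le_iff₀ hcpos, le_div_iff₀ hcpos]
    constructor
    · rintro ⟨h1, h2⟩
      exact ⟨by nlinarith, by nlinarith⟩
    · rintro ⟨h1, h2⟩
      exact ⟨by nlinarith, by nlinarith⟩
  constructor
  · -- s ≤ 0
    apply div_nonpos_of_nonpos_of_nonneg <;> linarith [hra.1.1]
  · -- 1 ≤ t
    rw [le_div_iff₀ hcpos]; linarith [hrb.1.2]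
  · exact hc.comp (by fun_prop) (fun x hx => (hkey x).mp hx)
  · intro x hx y hy hxy
    exact hm ((hkey x).mp hx) ((hkey y).mp hy) (by simp only [hA]; nlinarith)
  · exact fun x hx => hbij.mapsTo ((hkey x).mp hx)
  · intro x hx
    rw [hli _ ((hkey x).mp hx)]
    simp only [hA]
    field_simp
    ring
  · intro x hx
    have hrx := hri x hx
    have hmem : (g₀ x - α) / c ∈ Icc (-α / c) ((1 - α) / c) := by
      rw [hkey]
      have : A ((g₀ x - α) / c) = g₀ x := by simp only [hA]; field_simp; ring
      rw [this]
      exact hrx.1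
    refine ⟨hmem, ?_⟩
    have : A ((g₀ x - α) / c) = g₀ x := by simp only [hA]; field_simp; ring
    rw [this, hrx.2]
  · show f₀ (A 0) = a
    have : A 0 = α := by simp [hA]
    rw [this]; exact hra.2
  · show f₀ (A 1) = b
    have : A 1 = β := by simp [hA, hcdef]
    rw [this]; exact hrb.2
  · intro x hx y hy
    have hrx := hri x hx
    have hry := hri y hy
    have : A (((g₀ x - α) / c + (g₀ y - α) / c) / 2) = (g₀ x + g₀ y) / 2 := by
      simp only [hA]; field_simp; ring
    rw [hmean x hx y hy]
    congr 1
    exact this.symm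

end

/-- If F is a quasi-arithmetic mean on every compact proper subinterval
of I, then F is continuous on I × I and a quasi-arithmetic mean on I. -/
theorem stmt_19 (I : Set ℝ) (hI : I.OrdConnected)
    (hproper : ∃ x ∈ I, ∃ y ∈ I, x < y)
    (F : ℝ → ℝ → ℝ)
    (hmap : ∀ x ∈ I, ∀ y ∈ I, F x y ∈ I)
    (hloc : ∀ u ∈ I, ∀ v ∈ I, u < v →
      ∃ f g : ℝ → ℝ,
        ContinuousOn f (Set.Icc 0 1) ∧
        StrictMonoOn f (Set.Icc 0 1) ∧
        Set.BijOn f (Set.Icc 0 1) (Set.Icc u v) ∧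
        (∀ t ∈ Set.Icc (0:ℝ) 1, g (f t) = t) ∧
        (∀ x ∈ Set.Icc u v, ∀ y ∈ Set.Icc u v, F x y = f ((g x + g y) / 2))) :
    ContinuousOn (fun p : ℝ × ℝ => F p.1 p.2) (I ×ˢ I) ∧
    ∃ J : Set ℝ, J.OrdConnected ∧
      ∃ f g : ℝ → ℝ,
        ContinuousOn f J ∧
        (StrictMonoOn f J ∨ StrictAntiOn f J) ∧
        Set.BijOn f J I ∧
        (∀ t ∈ J, g (f t) = t) ∧
        (∀ x ∈ I, ∀ y ∈ I, F x y = f ((g x + g y) / 2)) := by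
  classical
  obtain ⟨a, ha, b, hb, hab⟩ := hproper
  -- existence of normalized generators on admissible intervals
  have hex : ∀ u v, u ∈ I → v ∈ I → u ≤ a → b ≤ v →
      ∃ s t f g, IsGen F a b u v s t f g := by
    intro u v hu hv hua hbv
    have huv : u < v := lt_of_le_of_lt hua (hab.trans_le hbv)
    obtain ⟨f₀, g₀, hc, hm, hbij, hli, hmean⟩ := hloc u hu v hv huv
    exact gen_exists hc hm hbij hli hmean ⟨hua, hab.le.trans hbv⟩ ⟨hua.trans hab.le, hbv⟩ hab
  choose sQ tQ fQ gQ hQ using hex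
  -- coherence of inverse maps, nested case
  have hcoh : ∀ u v (h1 : u ∈ I) (h2 : v ∈ I) (h3 : u ≤ a) (h4 : b ≤ v)
      (u' v' : ℝ) (h1' : u' ∈ I) (h2' : v' ∈ I) (h3' : u' ≤ a) (h4' : b ≤ v'),
      u' ≤ u → v ≤ v' → ∀ x ∈ Icc u v,
      gQ u v h1 h2 h3 h4 x = gQ u' v' h1' h2' h3' h4' x := by
    intro u v h1 h2 h3 h4 u' v' h1' h2' h3' h4' huu hvv x hx
    have hres := (hQ u' v' h1' h2' h3' h4').restrict huu hvv h3 h4 hab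
    exact (hQ u v h1 h2 h3 h4).g_unique hres ⟨h3, hab.le.trans h4⟩ ⟨h3.trans hab.le, h4⟩ x hx
  -- coherence, general overlapping case
  have hglue : ∀ u v (h1 : u ∈ I) (h2 : v ∈ I) (h3 : u ≤ a) (h4 : b ≤ v)
      (u' v' : ℝ) (h1' : u' ∈ I) (h2' : v' ∈ I) (h3' : u' ≤ a) (h4' : b ≤ v'),
      ∀ x, x ∈ Icc u v → x ∈ Icc u' v' →
      gQ u v h1 h2 h3 h4 x = gQ u' v' h1' h2' h3' h4' x := by
    intro u v h1 h2 h3 h4 u' v' h1' h2' h3' h4' x hx hx'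
    have hw1 : min u u' ∈ I := by
      rcases le_total u u' with h | h
      · rwa [min_eq_left h]
      · rwa [min_eq_right h]
    have hz1 : max v v' ∈ I := by
      rcases le_total v v' with h | h
      · rwa [max_eq_right h]
      · rwa [max_eq_left h]
    have hw3 : min u u' ≤ a := (min_le_left u u').trans h3
    have hz4 : b ≤ max v v' := h4.trans (le_max_left v v')
    rw [hcoh u v h1 h2 h3 h4 _ _ hw1 hz1 hw3 hz4 (min_le_left u u') (le_max_left v v') x hx,
      hcoh u' v' h1' h2' h3' h4' _ _ hw1 hz1 hw3 hz4 (min_le_right u u') (le_max_right v v') x hx']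
  have hminI : ∀ x, x ∈ I → min x a ∈ I := by
    intro x hx
    rcases le_total x a with h | h
    · rwa [min_eq_left h]
    · rwa [min_eq_right h]
  have hmaxI : ∀ x, x ∈ I → max x b ∈ I := by
    intro x hx
    rcases le_total x b with h | h
    · rwa [max_eq_right h]
    · rwa [max_eq_left h]
  set G : ℝ → ℝ := fun x => if hx : x ∈ I then
      gQ (min x a) (max x b) (hminI x hx) (hmaxI x hx) (min_le_right x a) (le_max_right x b) x
    else 0 with hGdef
  have hGspec : ∀ u v (h1 : u ∈ I) (h2 : v ∈ I) (h3 : u ≤ a) (h4 : b ≤ v),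
      ∀ x ∈ Icc u v, G x = gQ u v h1 h2 h3 h4 x := by
    intro u v h1 h2 h3 h4 x hx
    have hxI : x ∈ I := hI.out h1 h2 hx
    rw [hGdef]
    simp only [dif_pos hxI]
    exact hglue _ _ _ _ _ _ u v h1 h2 h3 h4 x ⟨min_le_left x a, le_max_left x b⟩ hx
  have hGmono : StrictMonoOn G I := by
    intro x hx y hy hxy
    have h1 : min x a ∈ I := hminI x hx
    have h2 : max y b ∈ I := hmaxI y hy
    have h3 : min x a ≤ a := min_le_right x a
    have h4 : b ≤ max y b := le_max_right y b
    have hxm : x ∈ Icc (min x a) (max y b) :=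
      ⟨min_le_left x a, hxy.le.trans (le_max_left y b)⟩
    have hym : y ∈ Icc (min x a) (max y b) :=
      ⟨(min_le_left x a).trans hxy.le, le_max_left y b⟩
    rw [hGspec _ _ h1 h2 h3 h4 x hxm, hGspec _ _ h1 h2 h3 h4 y hym]
    exact (hQ _ _ h1 h2 h3 h4).gmono hxm hym hxy
  have hGinj : ∀ x ∈ I, ∀ y ∈ I, G x = G y → x = y := by
    intro x hx y hy hxy
    rcases lt_trichotomy x y with h | h | h
    · exact absurd hxy (ne_of_lt (hGmono hx hy h))
    · exact h
    · exact absurd hxy.symm (ne_of_lt (hGmono hy hx h))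
  set J : Set ℝ := G '' I with hJdef
  set Fi : ℝ → ℝ := fun w => if hw : ∃ z, z ∈ I ∧ G z = w then hw.choose else a with hFidef
  have hFi1 : ∀ w ∈ J, Fi w ∈ I ∧ G (Fi w) = w := by
    intro w hw
    have hww : ∃ z, z ∈ I ∧ G z = w := by
      obtain ⟨z, hz1, hz2⟩ := (Set.mem_image _ _ _).mp hw
      exact ⟨z, hz1, hz2⟩
    rw [hFidef]
    simp only [dif_pos hww]
    exact hww.choose_spec
  have hFi2 : ∀ x ∈ I, Fi (G x) = x := by
    intro x hx
    have hGx : G x ∈ J := ⟨x, hx, rfl⟩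
    have := hFi1 _ hGx
    exact hGinj _ this.1 _ hx this.2
  have hJord : J.OrdConnected := by
    refine ⟨fun p hp r hr q hq => ?_⟩
    obtain ⟨x, hx, hxp⟩ := hp
    obtain ⟨y, hy, hyr⟩ := hr
    have h1 : min (min x y) a ∈ I := hminI _ (by
      rcases le_total x y with h | h
      · rwa [min_eq_left h]
      · rwa [min_eq_right h])
    have h2 : max (max x y) b ∈ I := hmaxI _ (by
      rcases le_total x y with h | h
      · rwa [max_eq_right h]
      · rwa [max_eq_left h])
    have h3 : min (min x y) a ≤ a := min_le_right _ _
    have h4 : b ≤ max (max x y) b := le_max_right _ _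
    set u := min (min x y) a
    set v := max (max x y) b
    have hxm : x ∈ Icc u v :=
      ⟨(min_le_left _ _).trans (min_le_left x y), (le_max_left x y).trans (le_max_left _ _)⟩
    have hym : y ∈ Icc u v :=
      ⟨(min_le_left _ _).trans (min_le_right x y), (le_max_right x y).trans (le_max_left _ _)⟩
    have hg := hQ u v h1 h2 h3 h4
    have hgx : gQ u v h1 h2 h3 h4 x ∈ Icc (sQ u v h1 h2 h3 h4) (tQ u v h1 h2 h3 h4) :=
      (hg.rinv x hxm).1
    have hgy : gQ u v h1 h2 h3 h4 y ∈ Icc (sQ u v h1 h2 h3 h4) (tQ u v h1 h2 h3 h4) :=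
      (hg.rinv y hym).1
    have hqm : q ∈ Icc (sQ u v h1 h2 h3 h4) (tQ u v h1 h2 h3 h4) := by
      rw [← hxp, hGspec u v h1 h2 h3 h4 x hxm] at hq
      rw [← hyr, hGspec u v h1 h2 h3 h4 y hym] at hq
      exact ⟨hgx.1.trans hq.1, hq.2.trans hgy.2⟩
    set z := fQ u v h1 h2 h3 h4 q with hzdef
    have hzm : z ∈ Icc u v := hg.maps hqm
    have hzI : z ∈ I := hI.out h1 h2 hzm
    have hGz : G z = q := by
      rw [hGspec u v h1 h2 h3 h4 z hzm, hzdef]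
      exact hg.linv q hqm
    exact ⟨z, hzI, hGz⟩
  have hFimono : StrictMonoOn Fi J := by
    intro p hp r hr hpr
    have h1 := hFi1 p hp
    have h2 := hFi1 r hr
    by_contra hle
    push_neg at hle
    rcases eq_or_lt_of_le hle with h | h
    · rw [← h1.2, ← h2.2, h] at hpr
      exact lt_irrefl _ hpr
    · have := hGmono h2.1 h1.1 h
      rw [h1.2, h2.2] at this
      exact absurd hpr (not_lt.mpr this.le)
  have hFibij : BijOn Fi J I := by
    refine ⟨fun w hw => (hFi1 w hw).1, ?_, ?_⟩
    · intro p hp r hr hpr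
      rw [← (hFi1 p hp).2, ← (hFi1 r hr).2, hpr]
    · intro x hx
      exact ⟨G x, ⟨x, hx, rfl⟩, hFi2 x hx⟩
  have hFicont : ContinuousOn Fi J :=
    aux_cont hJord hI hFimono (fun w hw => (hFi1 w hw).1)
      (fun x hx => ⟨G x, ⟨x, hx, rfl⟩, hFi2 x hx⟩)
  have hGcont : ContinuousOn G I :=
    aux_cont hI hJord hGmono (fun x hx => ⟨x, hx, rfl⟩) (fun w hw => by
      obtain ⟨z, hz1, hz2⟩ := hw
      exact ⟨z, hz1, hz2⟩)
  have hmidJ : ∀ w ∈ J, ∀ z ∈ J, (w + z) / 2 ∈ J := by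
    intro w hw z hz
    rcases le_total w z with h | h
    · exact hJord.out hw hz ⟨by linarith, by linarith⟩
    · exact hJord.out hz hw ⟨by linarith, by linarith⟩
  have hmean : ∀ x ∈ I, ∀ y ∈ I, F x y = Fi ((G x + G y) / 2) := by
    intro x hx y hy
    have h1 : min (min x y) a ∈ I := hminI _ (by
      rcases le_total x y with h | h
      · rwa [min_eq_left h]
      · rwa [min_eq_right h])
    have h2 : max (max x y) b ∈ I := hmaxI _ (by
      rcases le_total x y with h | h
      · rwa [max_eq_right h]
      · rwa [max_eq_left h])
    have h3 : min (min x y) a ≤ a := min_le_right _ _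
    have h4 : b ≤ max (max x y) b := le_max_right _ _
    set u := min (min x y) a
    set v := max (max x y) b
    have hxm : x ∈ Icc u v :=
      ⟨(min_le_left _ _).trans (min_le_left x y), (le_max_left x y).trans (le_max_left _ _)⟩
    have hym : y ∈ Icc u v :=
      ⟨(min_le_left _ _).trans (min_le_right x y), (le_max_right x y).trans (le_max_left _ _)⟩
    have hg := hQ u v h1 h2 h3 h4
    have hgx := hg.rinv x hxm
    have hgy := hg.rinv y hym
    set m := (gQ u v h1 h2 h3 h4 x + gQ u v h1 h2 h3 h4 y) / 2 with hmdef
    have hmm : m ∈ Icc (sQ u v h1 h2 h3 h4) (tQ u v h1 h2 h3 h4) := by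
      constructor
      · have := hgx.1.1; have := hgy.1.1; rw [hmdef]; linarith
      · have := hgx.1.2; have := hgy.1.2; rw [hmdef]; linarith
    set z := fQ u v h1 h2 h3 h4 m with hzdef
    have hzm : z ∈ Icc u v := hg.maps hmm
    have hzI : z ∈ I := hI.out h1 h2 hzm
    have hGz : G z = m := by
      rw [hGspec u v h1 h2 h3 h4 z hzm, hzdef]
      exact hg.linv m hmm
    have hGm : (G x + G y) / 2 = m := by
      rw [hGspec u v h1 h2 h3 h4 x hxm, hGspec u v h1 h2 h3 h4 y hym]
    rw [hGm, ← hGz, hFi2 z hzI, hg.mean x hxm y hym, ← hmdef, hzdef]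
  have hcontF : ContinuousOn (fun p : ℝ × ℝ => F p.1 p.2) (I ×ˢ I) := by
    have hinner : ContinuousOn (fun p : ℝ × ℝ => (G p.1 + G p.2) / 2) (I ×ˢ I) := by
      apply ContinuousOn.div_const
      exact (hGcont.comp continuous_fst.continuousOn (fun p hp => hp.1)).add
        (hGcont.comp continuous_snd.continuousOn (fun p hp => hp.2))
    have hcomp : ContinuousOn (fun p : ℝ × ℝ => Fi ((G p.1 + G p.2) / 2)) (I ×ˢ I) := by
      apply hFicont.comp hinner
      intro p hp
      exact hmidJ _ ⟨p.1, hp.1, rfl⟩ _ ⟨p.2, hp.2, rfl⟩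
    exact hcomp.congr (fun p hp => hmean p.1 hp.1 p.2 hp.2)
  refine ⟨hcontF, J, hJord, Fi, G, hFicont, Or.inl hFimono, hFibij, ?_, hmean⟩
  intro w hw
  exact (hFi1 w hw).2
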